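/- Let (χ, dist, μ) be a metric space equipped with a Borel probability measure μ, and let C ≥ 1 and D > 0 be constants such that μ(B_{r/2}(x)) ≥ (1/C)·r^D for every x ∈ χ and every r ∈ (0, 1], where B_{r/2}(x) denotes the open ball of radius r/2 centered at x. Then for every r ∈ (0, 1] there exists a finite collection 𝒥 of pairwise disjoint Borel subsets of χ whose union is χ such that every I ∈ 𝒥 satisfies diam(I) ≤ 2r and μ(I) ≥ (1/C)·r^D; in particular, the number of sets satisfies |𝒥| ≤ C·r^{−D}. -/

import Mathlib

open MeasureTheory Metric ENNReal

/-- Covering lemma: a metric probability space whose measure is regular (every ball of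
radius `r/2` has measure at least `(1/C) * r^D` for `r ∈ (0,1]`) admits, for every
`r ∈ (0,1]`, a finite partition into pairwise disjoint Borel pieces of diameter at most
`2r`, each of measure at least `(1/C) * r^D`; in particular there are at most `C * r^(-D)`
pieces. -/
theorem stmt0
    {χ : Type*} [MetricSpace χ] [MeasurableSpace χ] [BorelSpace χ]
    (μ : Measure χ) [IsProbabilityMeasure μ]
    (C D : ℝ) (hC : 1 ≤ C) (hD : 0 < D)
    (hreg : ∀ (x : χ) (r : ℝ), 0 < r → r ≤ 1 →
      ENNReal.ofReal ((1 / C) * r ^ D) ≤ μ (ball x (r / 2))) :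
    ∀ r : ℝ, 0 < r → r ≤ 1 →
      ∃ 𝒥 : Finset (Set χ),
        (∀ I ∈ 𝒥, MeasurableSet I) ∧
        ((𝒥 : Set (Set χ)).PairwiseDisjoint id) ∧
        (⋃₀ (𝒥 : Set (Set χ)) = Set.univ) ∧
        (∀ I ∈ 𝒥, Metric.diam I ≤ 2 * r ∧
          ENNReal.ofReal ((1 / C) * r ^ D) ≤ μ I) ∧
        ((𝒥.card : ℝ) ≤ C * r ^ (-D)) := by
  intro r hr hr1
  classical
  have hC0 : (0 : ℝ) < C := lt_of_lt_of_le one_pos hC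
  have hrD : (0 : ℝ) < r ^ D := Real.rpow_pos_of_pos hr D
  have hε : (0 : ℝ) < (1 / C) * r ^ D := by positivity
  have hCr : (0 : ℝ) < C * r ^ (-D) := by
    have := Real.rpow_pos_of_pos hr (-D); positivity
  have hinv : ((1 / C) * r ^ D)⁻¹ = C * r ^ (-D) := by
    rw [Real.rpow_neg hr.le]
    field_simp
  -- Any `r`-separated finset has cardinality at most `C * r ^ (-D)`.
  have key : ∀ s : Finset χ, ((s : Set χ).Pairwise fun a b => r ≤ dist a b) →
      (s.card : ℝ) ≤ C * r ^ (-D) := by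
    intro s hs
    have hdisj : (s : Set χ).PairwiseDisjoint (fun x => ball x (r / 2)) := by
      intro a ha b hb hab
      exact ball_disjoint_ball (by linarith [hs ha hb hab])
    have hsum : (s.card : ℝ≥0∞) * ENNReal.ofReal ((1 / C) * r ^ D) ≤ 1 := by
      calc (s.card : ℝ≥0∞) * ENNReal.ofReal ((1 / C) * r ^ D)
          = ∑ _x ∈ s, ENNReal.ofReal ((1 / C) * r ^ D) := by
            rw [Finset.sum_const, nsmul_eq_mul]
        _ ≤ ∑ x ∈ s, μ (ball x (r / 2)) :=
            Finset.sum_le_sum fun x _ => hreg x r hr hr1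
        _ = μ (⋃ x ∈ s, ball x (r / 2)) :=
            (measure_biUnion_finset hdisj fun x _ => measurableSet_ball).symm
        _ ≤ μ Set.univ := measure_mono (Set.subset_univ _)
        _ = 1 := measure_univ
    have h2 : (s.card : ℝ≥0∞) ≤ (ENNReal.ofReal ((1 / C) * r ^ D))⁻¹ :=
      ENNReal.le_inv_iff_mul_le.mpr hsum
    rw [← ENNReal.ofReal_inv_of_pos hε, hinv] at h2
    have h3 : ENNReal.ofReal (s.card : ℝ) ≤ ENNReal.ofReal (C * r ^ (-D)) := by
      rwa [ENNReal.ofReal_natCast]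
    exact (ENNReal.ofReal_le_ofReal_iff hCr.le).mp h3
  -- Take a maximal `r`-separated finset.
  set S : Set ℕ :=
    {n | ∃ s : Finset χ, ((s : Set χ).Pairwise fun a b => r ≤ dist a b) ∧ s.card = n} with hSdef
  have hS0 : 0 ∈ S := ⟨∅, by simp, rfl⟩
  have hSbdd : BddAbove S := by
    refine ⟨⌈C * r ^ (-D)⌉₊, fun n hn => ?_⟩
    obtain ⟨s, hs, rfl⟩ := hn
    exact_mod_cast (key s hs).trans (Nat.le_ceil _)
  obtain ⟨s, hs, hcard⟩ := Nat.sSup_mem ⟨0, hS0⟩ hSbdd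
  -- Maximality gives covering by balls of radius `r`.
  have hcover : ∀ y : χ, ∃ z ∈ s, dist y z < r := by
    intro y
    by_contra h
    push_neg at h
    have hy : y ∉ s := fun hy => by
      have := h y hy
      simp at this
      linarith
    have hins : (((insert y s : Finset χ) : Set χ)).Pairwise fun a b => r ≤ dist a b := by
      rw [Finset.coe_insert]
      haveI : Std.Symm (fun a b : χ => r ≤ dist a b) := ⟨fun a b hab => by rwa [dist_comm]⟩
      refine Set.pairwise_insert_of_symmetric |>.mpr
        ⟨hs, fun b hb _ => by simpa [dist_comm] using h b hb⟩
    have hmem : s.card + 1 ∈ S :=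
      ⟨insert y s, hins, by rw [Finset.card_insert_of_notMem hy]⟩
    have := le_csSup hSbdd hmem
    omega
  -- Enumerate the maximal separated set.
  set m := s.card with hm
  set x : Fin m → χ := fun i => (s.equivFin.symm i : χ) with hx
  have hxinj : Function.Injective x := fun i j h => s.equivFin.symm.injective (Subtype.ext h)
  have hxmem : ∀ i, x i ∈ s := fun i => (s.equivFin.symm i).2
  have hxsurj : ∀ z ∈ s, ∃ i, x i = z := fun z hz =>
    ⟨s.equivFin ⟨z, hz⟩, by simp [hx]⟩
  have hsep : ∀ i j, i ≠ j → r ≤ dist (x i) (x j) := fun i j hij =>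
    hs (hxmem i) (hxmem j) fun h => hij (hxinj h)
  -- The pieces.
  set A : Set χ := ⋃ i, ball (x i) (r / 2) with hA
  set B : Fin m → Set χ :=
    fun i => (ball (x i) r \ ⋃ j, ⋃ (_ : j < i), ball (x j) r) \ A with hB
  set I : Fin m → Set χ := fun i => ball (x i) (r / 2) ∪ B i with hI
  have hmeasA : MeasurableSet A := MeasurableSet.iUnion fun _ => measurableSet_ball
  have hmeasI : ∀ i, MeasurableSet (I i) := fun i =>
    measurableSet_ball.union ((measurableSet_ball.diff
      (MeasurableSet.iUnion fun _ => MeasurableSet.iUnion fun _ => measurableSet_ball)).diff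
      hmeasA)
  have hsubA : ∀ i, ball (x i) (r / 2) ⊆ A := by
    intro i; rw [hA]; exact Set.subset_iUnion (fun j => ball (x j) (r / 2)) i
  have hsub_big : ∀ i, I i ⊆ ball (x i) r := by
    intro i t ht
    rcases ht with ht | ht
    · exact ball_subset_ball (by linarith) ht
    · exact ht.1.1
  have hballdisj : ∀ i j, i ≠ j →
      Disjoint (ball (x i) (r / 2)) (ball (x j) (r / 2)) := fun i j h =>
    ball_disjoint_ball (by linarith [hsep i j h])
  have hIdisj : ∀ i j, i ≠ j → Disjoint (I i) (I j) := by
    intro i j hij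
    rw [Set.disjoint_left]
    rintro t (hti | hti) (htj | htj)
    · exact Set.disjoint_left.mp (hballdisj i j hij) hti htj
    · exact htj.2 (hsubA i hti)
    · exact hti.2 (hsubA j htj)
    · rcases lt_or_gt_of_ne hij with hlt | hlt
      · exact htj.1.2 (Set.mem_iUnion₂.mpr ⟨i, hlt, hti.1.1⟩)
      · exact hti.1.2 (Set.mem_iUnion₂.mpr ⟨j, hlt, htj.1.1⟩)
  have hIcover : ∀ y : χ, ∃ i, y ∈ I i := by
    intro y
    by_cases hyA : y ∈ A
    · obtain ⟨i, hi⟩ := Set.mem_iUnion.mp hyA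
      exact ⟨i, Or.inl hi⟩
    · obtain ⟨z, hz, hzy⟩ := hcover y
      obtain ⟨i0, rfl⟩ := hxsurj z hz
      set T : Finset (Fin m) := Finset.univ.filter fun i => y ∈ ball (x i) r with hT
      have hTne : T.Nonempty := ⟨i0, by simp [hT, mem_ball, hzy]⟩
      set i := T.min' hTne with hi
      have hiT : i ∈ T := T.min'_mem hTne
      have hyball : y ∈ ball (x i) r := by
        simpa [hT] using hiT
      refine ⟨i, Or.inr ⟨⟨hyball, ?_⟩, hyA⟩⟩
      intro hmem
      obtain ⟨j, hji, hj⟩ := Set.mem_iUnion₂.mp hmem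
      have hjT : j ∈ T := by simp only [hT, Finset.mem_filter]; exact ⟨Finset.mem_univ _, hj⟩
      exact absurd (T.min'_le j hjT) (not_le.mpr hji)
  -- Assemble.
  refine ⟨Finset.image I Finset.univ, ?_, ?_, ?_, ?_, ?_⟩
  · intro J hJ
    obtain ⟨i, _, rfl⟩ := Finset.mem_image.mp hJ
    exact hmeasI i
  · intro u hu v hv huv
    obtain ⟨i, _, rfl⟩ := Finset.mem_image.mp (Finset.mem_coe.mp hu)
    obtain ⟨j, _, rfl⟩ := Finset.mem_image.mp (Finset.mem_coe.mp hv)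
    exact hIdisj i j fun h => huv (by rw [h])
  · apply Set.eq_univ_of_forall
    intro y
    obtain ⟨i, hi⟩ := hIcover y
    exact ⟨I i, Finset.mem_coe.mpr (Finset.mem_image_of_mem _ (Finset.mem_univ i)), hi⟩
  · intro J hJ
    obtain ⟨i, _, rfl⟩ := Finset.mem_image.mp hJ
    constructor
    · calc Metric.diam (I i) ≤ Metric.diam (ball (x i) r) :=
            Metric.diam_mono (hsub_big i) isBounded_ball
        _ ≤ 2 * r := diam_ball hr.le
    · exact le_trans (hreg (x i) r hr hr1)
        (measure_mono (Set.subset_union_left))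
  · calc ((Finset.image I Finset.univ).card : ℝ)
        ≤ ((Finset.univ : Finset (Fin m)).card : ℝ) := by
          exact_mod_cast Finset.card_image_le
      _ = (m : ℝ) := by simp
      _ ≤ C * r ^ (-D) := hm ▸ key s hs
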